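/- Let X be a real vector space, n ≥ 2, and let (·,·|·,...,·) be a weak n-inner product on X. Fix x₂,...,xₙ ∈ X and set Y = span{x₂,...,xₙ}. If x, x', y, y' ∈ X satisfy x' − x ∈ Y and y' − y ∈ Y, then (x',y'|xₙ,...,x₂) = (x,y|xₙ,...,x₂); that is, the map ψ(x̂,ŷ) := (x,y|xₙ,...,x₂) is well defined on the quotient X/Y. -/
import Mathlib


/-- A weak `n`-inner product on a real vector space `X`, where `n = m + 2 ≥ 2`.
The value `f x y v` represents `(x, y | xₙ, …, x₂)`, where the tuple
`v : Fin (m+1) → X` lists the conditioning vectors `xₙ, x_{n-1}, …, x₂`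
(so `v 0 = xₙ`). -/
structure WeakNInner (X : Type*) [AddCommGroup X] [Module ℝ X] (m : ℕ) where
  f : X → X → (Fin (m + 1) → X) → ℝ
  /-- P1 (positivity) -/
  nonneg : ∀ (x : X) (v : Fin (m + 1) → X), 0 ≤ f x x v
  /-- P1 (definiteness): `(x,x|xₙ,…,x₂) = 0` iff `x, x₂, …, xₙ` are linearly dependent. -/
  eq_zero_iff : ∀ (x : X) (v : Fin (m + 1) → X),
    f x x v = 0 ↔ ¬ LinearIndependent ℝ (Fin.cons x v : Fin (m + 2) → X)
  /-- P2 (interchangeability): `(x,x|xₙ,x_{n-1},…,x₂) = (xₙ,xₙ|x,x_{n-1},…,x₂)`. -/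
  interchange : ∀ (x : X) (v : Fin (m + 1) → X),
    f x x v = f (v 0) (v 0) (Function.update v 0 x)
  /-- P3 (symmetry) -/
  symm : ∀ (x y : X) (v : Fin (m + 1) → X), f x y v = f y x v
  /-- P4 (homogeneity) -/
  smul_left : ∀ (α : ℝ) (x y : X) (v : Fin (m + 1) → X),
    f (α • x) y v = α * f x y v
  /-- P5 (additivity) -/
  add_left : ∀ (x x' y : X) (v : Fin (m + 1) → X),
    f (x + x') y v = f x y v + f x' y v

theorem WeakNInner.self_eq_zero {X : Type*} [AddCommGroup X] [Module ℝ X]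
    {m : ℕ} (P : WeakNInner X m) (v : Fin (m + 1) → X) {z : X}
    (hz : z ∈ Submodule.span ℝ (Set.range v)) : P.f z z v = 0 := by
  rw [P.eq_zero_iff, linearIndependent_fin_cons]
  tauto

theorem WeakNInner.smul_right {X : Type*} [AddCommGroup X] [Module ℝ X]
    {m : ℕ} (P : WeakNInner X m) (v : Fin (m + 1) → X) (α : ℝ) (x y : X) :
    P.f x (α • y) v = α * P.f x y v := by
  rw [P.symm, P.smul_left, P.symm]

theorem WeakNInner.add_right {X : Type*} [AddCommGroup X] [Module ℝ X]
    {m : ℕ} (P : WeakNInner X m) (v : Fin (m + 1) → X) (x y y' : X) :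
    P.f x (y + y') v = P.f x y v + P.f x y' v := by
  rw [P.symm, P.add_left, P.symm, P.symm y' x]

theorem WeakNInner.left_eq_zero {X : Type*} [AddCommGroup X] [Module ℝ X]
    {m : ℕ} (P : WeakNInner X m) (v : Fin (m + 1) → X) {z : X} (y : X)
    (hz : z ∈ Submodule.span ℝ (Set.range v)) : P.f z y v = 0 := by
  set a := P.f z y v with ha
  set b := P.f y y v with hb
  have hb0 : 0 ≤ b := P.nonneg y v
  have key : ∀ t : ℝ, 0 ≤ 2 * t * a + t ^ 2 * b := by
    intro t
    have h := P.nonneg (z + t • y) v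
    simp only [P.add_left, P.add_right, P.smul_left, P.smul_right,
      P.self_eq_zero v hz, P.symm y z] at h
    nlinarith [h]
  have hbp : (0:ℝ) < b + 1 := by linarith
  have h := key (-a / (b + 1))
  have : 2 * (-a / (b + 1)) * a + (-a / (b + 1)) ^ 2 * b
      = -(a ^ 2) * (b + 2) / (b + 1) ^ 2 := by
    field_simp
    ring
  rw [this, le_div_iff₀ (by positivity)] at h
  nlinarith [sq_nonneg a]

/-- The weak `n`-inner product only depends on the first two arguments modulo
`Y = span{x₂, …, xₙ}`: if `x' - x ∈ Y` and `y' - y ∈ Y`, then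
`(x',y'|xₙ,…,x₂) = (x,y|xₙ,…,x₂)`.  Hence `ψ(x̂, ŷ) := (x,y|xₙ,…,x₂)` is well
defined on the quotient `X/Y`. -/
theorem weakNInner_well_defined_on_quotient {X : Type*} [AddCommGroup X] [Module ℝ X]
    {m : ℕ} (P : WeakNInner X m) (v : Fin (m + 1) → X) (x x' y y' : X)
    (hx : x' - x ∈ Submodule.span ℝ (Set.range v))
    (hy : y' - y ∈ Submodule.span ℝ (Set.range v)) :
    P.f x' y' v = P.f x y v := by
  have hx' : x' = x + (x' - x) := by abel
  have hy' : y' = y + (y' - y) := by abel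
  calc P.f x' y' v = P.f x y' v + P.f (x' - x) y' v := by
        rw [← P.add_left, ← hx']
    _ = P.f x y' v := by rw [P.left_eq_zero v y' hx]; ring
    _ = P.f x y v + P.f x (y' - y) v := by rw [← P.add_right, ← hy']
    _ = P.f x y v := by
        rw [P.symm x (y' - y), P.left_eq_zero v x hy]; ring
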